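/- arXiv:1810.09281 — 2 statements merged into one kernel-verified Lean document; each statement's English description precedes it below -/
import Mathlib

section
/- Fix s ∈ (3/4, 1) and a, b, S > 0, and define K̃(t) = aS + bS²t^{3−2s} − t^{2s} for t > 0. Then there exists a unique T > 0 such that K̃(T) = 0, K̃(t) > 0 for all t ∈ (0, T), and K̃(t) < 0 for all t > T. Consequently, T is the unique maximum point on (0, ∞) of the function K(t) = (aS/2)t^{3−2s} + (bS²/4)t^{6−4s} − ((3−2s)/6)t³, whose derivative satisfies K′(t) = ((3−2s)/2) t^{2−2s} K̃(t). -/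
open MeasureTheory Real Set Filter Topology

noncomputable section

abbrev R3 : Type := EuclideanSpace ℝ (Fin 3)

/-- Squared Gagliardo seminorm `[u]_s²`. -/
def gagSq (s : ℝ) (u : R3 → ℝ) : ℝ :=
  ∫ p : R3 × R3, (u p.1 - u p.2) ^ 2 / ‖p.1 - p.2‖ ^ (3 + 2 * s)

/-- Gagliardo bilinear form. -/
def gagForm (s : ℝ) (u v : R3 → ℝ) : ℝ :=
  ∫ p : R3 × R3, (u p.1 - u p.2) * (v p.1 - v p.2) / ‖p.1 - p.2‖ ^ (3 + 2 * s)

/-- Membership in `H^s(ℝ³)`. -/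
def MemHs (s : ℝ) (u : R3 → ℝ) : Prop :=
  MemLp u 2 volume ∧
    Integrable (fun p : R3 × R3 => (u p.1 - u p.2) ^ 2 / ‖p.1 - p.2‖ ^ (3 + 2 * s))

/-- Squared `H^s` norm. -/
def hsNormSq (s : ℝ) (u : R3 → ℝ) : ℝ := gagSq s u + ∫ x : R3, u x ^ 2

/-- The fractional critical exponent `2*_s = 6/(3-2s)`. -/
def pc (s : ℝ) : ℝ := 6 / (3 - 2 * s)

/-- The primitive `F(t) = ∫₀ᵗ f`. -/
def prim (f : ℝ → ℝ) (t : ℝ) : ℝ := ∫ τ in (0:ℝ)..t, f τ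

/-- Hypotheses (f1)-(f4) together with continuity and vanishing for `t ≤ 0`. -/
def Hf (s : ℝ) (f : ℝ → ℝ) (q σ C₀ ϑ : ℝ) : Prop :=
  Continuous f ∧ (∀ t ≤ (0:ℝ), f t = 0) ∧
  Tendsto (fun t => f t / t ^ (3:ℕ)) (𝓝[>] 0) (𝓝 0) ∧
  (q ∈ Ioo (4:ℝ) (pc s) ∧ σ ∈ Ioo (4:ℝ) (pc s) ∧ 0 < C₀ ∧
    (∀ t > (0:ℝ), C₀ * t ^ (q - 1) ≤ f t) ∧
    Tendsto (fun t => f t / t ^ (σ - 1)) atTop (𝓝 0)) ∧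
  (ϑ ∈ Ioo (4:ℝ) (pc s) ∧ ∀ t > (0:ℝ), 0 < ϑ * prim f t ∧ ϑ * prim f t ≤ t * f t) ∧
  StrictMonoOn (fun t => f t / t ^ (3:ℕ)) (Ioi 0)

/-- Hypotheses (V1)-(V2) on the potential. -/
def HV (V : R3 → ℝ) (V₁ : ℝ) (Λ : Set R3) (V₀ : ℝ) : Prop :=
  Continuous V ∧ IsGLB (range V) V₁ ∧ 0 < V₁ ∧
  IsOpen Λ ∧ Bornology.IsBounded Λ ∧ Λ.Nonempty ∧
  IsGLB (V '' Λ) V₀ ∧ 0 < V₀ ∧ ∀ x ∈ frontier Λ, V₀ < V x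

/-- Truncated nonlinearity `f̃`. -/
def ftil (s V₁ K a₀ : ℝ) (f : ℝ → ℝ) (t : ℝ) : ℝ :=
  if t ≤ a₀ then f t + max t 0 ^ (pc s - 1) else V₁ / K * t

/-- Penalized nonlinearity `g(x,t)`. -/
def gpen (s V₁ K a₀ : ℝ) (f : ℝ → ℝ) (Λ : Set R3) (x : R3) (t : ℝ) : ℝ :=
  if t ≤ 0 then 0
  else Λ.indicator (fun _ => f t + max t 0 ^ (pc s - 1)) x
    + (1 - Λ.indicator (fun _ => (1:ℝ)) x) * ftil s V₁ K a₀ f t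

/-- Primitive `G(x,t) = ∫₀ᵗ g(x,τ) dτ`. -/
def Gpen (s V₁ K a₀ : ℝ) (f : ℝ → ℝ) (Λ : Set R3) (x : R3) (t : ℝ) : ℝ :=
  ∫ τ in (0:ℝ)..t, gpen s V₁ K a₀ f Λ x τ

/-- Membership in the space `H_ε`. -/
def MemHeps (s ε : ℝ) (V : R3 → ℝ) (u : R3 → ℝ) : Prop :=
  MemHs s u ∧ Integrable (fun x : R3 => V (ε • x) * u x ^ 2)

/-- Squared norm `‖u‖_ε² = a[u]_s² + ∫ V(εx)u²`. -/
def normEpsSq (s a ε : ℝ) (V : R3 → ℝ) (u : R3 → ℝ) : ℝ :=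
  a * gagSq s u + ∫ x : R3, V (ε • x) * u x ^ 2

/-- The modified energy functional `J_ε`. -/
def Jeps (s a b ε V₁ K a₀ : ℝ) (f : ℝ → ℝ) (Λ : Set R3) (V : R3 → ℝ) (u : R3 → ℝ) : ℝ :=
  1 / 2 * normEpsSq s a ε V u + b / 4 * gagSq s u ^ 2
    - ∫ x : R3, Gpen s V₁ K a₀ f Λ (ε • x) (u x)

/-- The pairing `⟨J'_ε(u), v⟩`. -/
def JepsD (s a b ε V₁ K a₀ : ℝ) (f : ℝ → ℝ) (Λ : Set R3) (V : R3 → ℝ) (u v : R3 → ℝ) : ℝ :=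
  (a + b * gagSq s u) * gagForm s u v + (∫ x : R3, V (ε • x) * u x * v x)
    - ∫ x : R3, gpen s V₁ K a₀ f Λ (ε • x) (u x) * v x

/-- Admissible mountain-pass paths `Γ_ε` (continuity w.r.t. the `H_ε` norm). -/
def MPpaths (s a b ε V₁ K a₀ : ℝ) (f : ℝ → ℝ) (Λ : Set R3) (V : R3 → ℝ) :
    Set (ℝ → R3 → ℝ) :=
  {γ | (∀ t ∈ Icc (0:ℝ) 1, MemHeps s ε V (γ t)) ∧
    (∀ t ∈ Icc (0:ℝ) 1, ∀ δ > 0, ∃ η > 0, ∀ t' ∈ Icc (0:ℝ) 1,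
      |t' - t| < η → normEpsSq s a ε V (γ t' - γ t) < δ) ∧
    γ 0 = 0 ∧ Jeps s a b ε V₁ K a₀ f Λ V (γ 1) ≤ 0}

/-- The mountain-pass level `c_ε`. -/
def cMP (s a b ε V₁ K a₀ : ℝ) (f : ℝ → ℝ) (Λ : Set R3) (V : R3 → ℝ) : ℝ :=
  sInf ((fun γ => sSup ((fun t => Jeps s a b ε V₁ K a₀ f Λ V (γ t)) '' Icc (0:ℝ) 1)) ''
    MPpaths s a b ε V₁ K a₀ f Λ V)

/-- The limiting (autonomous) functional `I_μ`. -/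
def Ilim (s a b μ : ℝ) (f : ℝ → ℝ) (u : R3 → ℝ) : ℝ :=
  1 / 2 * (a * gagSq s u + μ * ∫ x : R3, u x ^ 2) + b / 4 * gagSq s u ^ 2
    - ∫ x : R3, (prim f (u x) + 1 / pc s * max (u x) 0 ^ pc s)

/-- The pairing `⟨I'_μ(u), v⟩`. -/
def IlimD (s a b μ : ℝ) (f : ℝ → ℝ) (u v : R3 → ℝ) : ℝ :=
  (a + b * gagSq s u) * gagForm s u v + μ * (∫ x : R3, u x * v x)
    - ∫ x : R3, (f (u x) + max (u x) 0 ^ (pc s - 1)) * v x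

/-- Nehari manifold of `I_μ`. -/
def Nehari (s a b μ : ℝ) (f : ℝ → ℝ) : Set (R3 → ℝ) :=
  {u | MemHs s u ∧ u ≠ 0 ∧ IlimD s a b μ f u u = 0}

/-- Ground state level `d_μ`. -/
def dlim (s a b μ : ℝ) (f : ℝ → ℝ) : ℝ :=
  sInf (Ilim s a b μ f '' Nehari s a b μ f)

/-- Palais–Smale sequence for `J_ε` at level `c`. -/
def PSseq (s a b ε V₁ K a₀ : ℝ) (f : ℝ → ℝ) (Λ : Set R3) (V : R3 → ℝ)
    (c : ℝ) (U : ℕ → R3 → ℝ) : Prop :=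
  (∀ n, MemHeps s ε V (U n)) ∧
  Tendsto (fun n => Jeps s a b ε V₁ K a₀ f Λ V (U n)) atTop (𝓝 c) ∧
  ∃ e : ℕ → ℝ, Tendsto e atTop (𝓝 0) ∧ ∀ n, ∀ v : R3 → ℝ, MemHeps s ε V v →
    |JepsD s a b ε V₁ K a₀ f Λ V (U n) v| ≤ e n * Real.sqrt (normEpsSq s a ε V v)

end

/-- properties of `K̃(t) = aS + bS²t^{3-2s} - t^{2s}` and of
`K(t) = (aS/2)t^{3-2s} + (bS²/4)t^{6-4s} - ((3-2s)/6)t³`. -/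
theorem statement_3
    (s a b S : ℝ) (hs : s ∈ Ioo (3/4:ℝ) 1) (ha : 0 < a) (hb : 0 < b) (hS : 0 < S) :
    ∃ T : ℝ, 0 < T ∧
      a * S + b * S ^ 2 * T ^ (3 - 2 * s) - T ^ (2 * s) = 0 ∧
      (∀ t ∈ Ioo (0:ℝ) T, 0 < a * S + b * S ^ 2 * t ^ (3 - 2 * s) - t ^ (2 * s)) ∧
      (∀ t, T < t → a * S + b * S ^ 2 * t ^ (3 - 2 * s) - t ^ (2 * s) < 0) ∧
      (∀ T' : ℝ, 0 < T' → a * S + b * S ^ 2 * T' ^ (3 - 2 * s) - T' ^ (2 * s) = 0 →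
        T' = T) ∧
      (∀ t ∈ Ioi (0:ℝ), t ≠ T →
        a * S / 2 * t ^ (3 - 2 * s) + b * S ^ 2 / 4 * t ^ (6 - 4 * s)
            - (3 - 2 * s) / 6 * t ^ (3:ℕ)
          < a * S / 2 * T ^ (3 - 2 * s) + b * S ^ 2 / 4 * T ^ (6 - 4 * s)
            - (3 - 2 * s) / 6 * T ^ (3:ℕ)) ∧
      (∀ t ∈ Ioi (0:ℝ),
        HasDerivAt (fun t : ℝ =>
            a * S / 2 * t ^ (3 - 2 * s) + b * S ^ 2 / 4 * t ^ (6 - 4 * s)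
              - (3 - 2 * s) / 6 * t ^ (3:ℕ))
          ((3 - 2 * s) / 2 * t ^ (2 - 2 * s)
            * (a * S + b * S ^ 2 * t ^ (3 - 2 * s) - t ^ (2 * s))) t) := by
  obtain ⟨hs1, hs2⟩ := hs
  have hps : (0:ℝ) < 4*s-3 := by linarith
  have hns : (0:ℝ) < 3-2*s := by linarith
  set h : ℝ → ℝ := fun t => a*S*t^(2*s-3) + b*S^2 - t^(4*s-3) with hh
  have hfac : ∀ t : ℝ, 0 < t → a * S + b * S ^ 2 * t ^ (3 - 2 * s) - t ^ (2 * s)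
      = t^(3-2*s) * h t := by
    intro t ht
    simp only [hh]
    have e1 : t ^ (3-2*s) * t ^ (2*s-3) = 1 := by
      rw [← Real.rpow_add ht]; norm_num
    have e2 : t ^ (3-2*s) * t ^ (4*s-3) = t ^ (2*s) := by
      rw [← Real.rpow_add ht]; ring_nf
    linear_combination e2 - a*S*e1
  have hanti : StrictAntiOn h (Ioi 0) := by
    intro x hx y hy hxy
    have h1 : y^(2*s-3) < x^(2*s-3) :=
      Real.rpow_lt_rpow_of_neg hx hxy (by linarith)
    have h2 : x^(4*s-3) < y^(4*s-3) :=
      Real.rpow_lt_rpow (le_of_lt hx) hxy hps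
    have := mul_lt_mul_of_pos_left h1 (mul_pos ha hS)
    simp only [hh]
    linarith
  -- endpoints for the IVT
  set r : ℝ := (b*S^2) ^ (4*s-3)⁻¹ with hr
  have hr0 : 0 < r := Real.rpow_pos_of_pos (by positivity) _
  set t0 : ℝ := min 1 r / 2 with ht0def
  have ht00 : 0 < t0 := by positivity
  have ht0r : t0 < r := by
    have : min 1 r ≤ r := min_le_right _ _
    simp only [ht0def]; linarith
  have hht0 : 0 < h t0 := by
    have h1 : t0 ^ (4*s-3) < r ^ (4*s-3) := Real.rpow_lt_rpow ht00.le ht0r hps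
    have h2 : r ^ (4*s-3) = b*S^2 := by
      rw [hr, Real.rpow_inv_rpow (by positivity) hps.ne']
    have h3 : 0 < a*S*t0^(2*s-3) := by positivity
    simp only [hh]; rw [h2] at h1; linarith
  set q : ℝ := (a*S + b*S^2 + 1) ^ (4*s-3)⁻¹ with hq
  set t1 : ℝ := max 1 q with ht1def
  have ht11 : (1:ℝ) ≤ t1 := le_max_left _ _
  have hht1 : h t1 < 0 := by
    have hq1 : q ^ (4*s-3) = a*S + b*S^2 + 1 := by
      rw [hq, Real.rpow_inv_rpow (by positivity) hps.ne']
    have h1 : q ^ (4*s-3) ≤ t1 ^ (4*s-3) :=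
      Real.rpow_le_rpow (Real.rpow_nonneg (by positivity) _) (le_max_right _ _) hps.le
    have h2 : t1 ^ (2*s-3) ≤ 1 :=
      Real.rpow_le_one_of_one_le_of_nonpos ht11 (by linarith)
    have h3 : a*S*t1^(2*s-3) ≤ a*S := by
      nlinarith [mul_pos ha hS]
    simp only [hh]
    rw [hq1] at h1
    linarith
  have ht01 : t0 ≤ t1 := by
    have : t0 ≤ 1/2 := by
      simp only [ht0def]
      have : min 1 r ≤ 1 := min_le_left _ _
      linarith
    linarith
  have hcont : ContinuousOn h (Icc t0 t1) := by
    have : ∀ x ∈ Icc t0 t1, ContinuousAt h x := by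
      intro x hx
      have hx0 : x ≠ 0 := (lt_of_lt_of_le ht00 hx.1).ne'
      have hc1 : ContinuousAt (fun y : ℝ => y ^ (2*s-3)) x :=
        Real.continuousAt_rpow_const x _ (Or.inl hx0)
      have hc2 : ContinuousAt (fun y : ℝ => y ^ (4*s-3)) x :=
        Real.continuousAt_rpow_const x _ (Or.inl hx0)
      simp only [hh]
      exact ((continuousAt_const.mul hc1).add continuousAt_const).sub hc2
    exact fun x hx => (this x hx).continuousWithinAt
  obtain ⟨T, hTmem, hhT⟩ : ∃ T ∈ Icc t0 t1, h T = 0 := by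
    have := intermediate_value_Icc' ht01 hcont
    have h0 : (0:ℝ) ∈ Icc (h t1) (h t0) := ⟨hht1.le, hht0.le⟩
    obtain ⟨T, hT, hT0⟩ := this h0
    exact ⟨T, hT, hT0⟩
  have hT0 : 0 < T := lt_of_lt_of_le ht00 hTmem.1
  have hTIoi : T ∈ Ioi (0:ℝ) := hT0
  -- sign facts for K̃
  have Kpos : ∀ t ∈ Ioo (0:ℝ) T, 0 < a * S + b * S ^ 2 * t ^ (3 - 2 * s) - t ^ (2 * s) := by
    intro t ht
    rw [hfac t ht.1]
    have : h T < h t := hanti ht.1 hTIoi ht.2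
    rw [hhT] at this
    exact mul_pos (Real.rpow_pos_of_pos ht.1 _) this
  have Kneg : ∀ t, T < t → a * S + b * S ^ 2 * t ^ (3 - 2 * s) - t ^ (2 * s) < 0 := by
    intro t ht
    have ht0' : 0 < t := hT0.trans ht
    rw [hfac t ht0']
    have : h t < h T := hanti hTIoi ht0' ht
    rw [hhT] at this
    exact mul_neg_of_pos_of_neg (Real.rpow_pos_of_pos ht0' _) this
  have Kzero : a * S + b * S ^ 2 * T ^ (3 - 2 * s) - T ^ (2 * s) = 0 := by
    rw [hfac T hT0, hhT, mul_zero]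
  have Kuniq : ∀ T' : ℝ, 0 < T' → a * S + b * S ^ 2 * T' ^ (3-2*s) - T' ^ (2*s) = 0 → T' = T := by
    intro T' hT' hK'
    rw [hfac T' hT'] at hK'
    have hhT' : h T' = 0 := by
      rcases mul_eq_zero.1 hK' with h1 | h1
      · exact absurd h1 (Real.rpow_pos_of_pos hT' _).ne'
      · exact h1
    exact hanti.injOn hT' hTIoi (hhT'.trans hhT.symm)
  -- derivative
  have hderiv : ∀ t ∈ Ioi (0:ℝ),
      HasDerivAt (fun t : ℝ =>
          a * S / 2 * t ^ (3 - 2 * s) + b * S ^ 2 / 4 * t ^ (6 - 4 * s)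
            - (3 - 2 * s) / 6 * t ^ (3:ℕ))
        ((3 - 2 * s) / 2 * t ^ (2 - 2 * s)
          * (a * S + b * S ^ 2 * t ^ (3 - 2 * s) - t ^ (2 * s))) t := by
    intro t ht
    have ht' : (0:ℝ) < t := ht
    have d1 : HasDerivAt (fun x : ℝ => x ^ (3-2*s)) ((3-2*s) * t ^ (3-2*s-1)) t :=
      Real.hasDerivAt_rpow_const (Or.inl ht'.ne')
    have d2 : HasDerivAt (fun x : ℝ => x ^ (6-4*s)) ((6-4*s) * t ^ (6-4*s-1)) t :=
      Real.hasDerivAt_rpow_const (Or.inl ht'.ne')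
    have d3 : HasDerivAt (fun x : ℝ => x ^ (3:ℕ)) ((3:ℕ) * t ^ (2:ℕ)) t := by
      simpa using hasDerivAt_pow 3 t
    have D := ((d1.const_mul (a*S/2)).add (d2.const_mul (b*S^2/4))).sub
      (d3.const_mul ((3-2*s)/6))
    refine D.congr_deriv ?_
    symm
    have e1 : t ^ (3-2*s-1) = t ^ (2-2*s) := by ring_nf
    have e2 : t ^ (6-4*s-1) = t ^ (5-4*s) := by ring_nf
    have e3 : t ^ (2-2*s) * t ^ (3-2*s) = t ^ (5-4*s) := by
      rw [← Real.rpow_add ht']; ring_nf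
    have e4 : t ^ (2-2*s) * t ^ (2*s) = t ^ (2:ℕ) := by
      rw [← Real.rpow_add ht', ← Real.rpow_natCast t 2]; norm_num
    rw [e1, e2]
    push_cast
    linear_combination (b*S^2*(3-2*s)/2) * e3 - ((3-2*s)/2) * e4
  -- maximality
  have hmax : ∀ t ∈ Ioi (0:ℝ), t ≠ T →
      a * S / 2 * t ^ (3 - 2 * s) + b * S ^ 2 / 4 * t ^ (6 - 4 * s)
          - (3 - 2 * s) / 6 * t ^ (3:ℕ)
        < a * S / 2 * T ^ (3 - 2 * s) + b * S ^ 2 / 4 * T ^ (6 - 4 * s)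
          - (3 - 2 * s) / 6 * T ^ (3:ℕ) := by
    set K : ℝ → ℝ := fun t => a * S / 2 * t ^ (3 - 2 * s) + b * S ^ 2 / 4 * t ^ (6 - 4 * s)
        - (3 - 2 * s) / 6 * t ^ (3:ℕ) with hK
    intro t ht htT
    have hcontK : ∀ u v : ℝ, 0 < u → ContinuousOn K (Icc u v) := by
      intro u v hu
      intro x hx
      exact ((hderiv x (lt_of_lt_of_le hu hx.1)).continuousAt).continuousWithinAt
    have hDK : ∀ x : ℝ, 0 < x → deriv K x =
        (3 - 2 * s) / 2 * x ^ (2 - 2 * s)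
          * (a * S + b * S ^ 2 * x ^ (3 - 2 * s) - x ^ (2 * s)) := fun x hx =>
      (hderiv x hx).deriv
    rcases lt_or_gt_of_ne htT with hlt | hgt
    · have mono : StrictMonoOn K (Icc t T) := by
        apply strictMonoOn_of_deriv_pos (convex_Icc t T) (hcontK t T ht)
        intro x hx
        rw [interior_Icc] at hx
        have hx0 : 0 < x := lt_trans ht hx.1
        rw [hDK x hx0]
        have := Kpos x ⟨hx0, hx.2⟩
        positivity
      exact mono ⟨le_refl t, hlt.le⟩ ⟨hlt.le, le_refl T⟩ hlt
    · have mono : StrictAntiOn K (Icc T t) := by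
        apply strictAntiOn_of_deriv_neg (convex_Icc T t) (hcontK T t hT0)
        intro x hx
        rw [interior_Icc] at hx
        have hx0 : 0 < x := lt_trans hT0 hx.1
        rw [hDK x hx0]
        have hneg := Kneg x hx.1
        have hpos : 0 < (3 - 2 * s) / 2 * x ^ (2 - 2 * s) := by positivity
        exact mul_neg_of_pos_of_neg hpos hneg
      exact mono ⟨le_refl T, hgt.le⟩ ⟨hgt.le, le_refl t⟩ hgt
  exact ⟨T, hT0, Kzero, Kpos, Kneg, Kuniq, hmax, hderiv⟩
end

section
/- Assume (V1)-(V2) and (f1)-(f4). Then for every ε > 0 and every u ∈ H_ε one has J_ε(u) − (1/ϑ)⟨J′_ε(u), u⟩ ≥ ((ϑ−2)/(2ϑ))(1 − 1/K)‖u‖_ε². Consequently, every Palais–Smale sequence {u_n} ⊂ H_ε at the mountain-pass level (i.e. J_ε(u_n) → c_ε and J′_ε(u_n) → 0 in the dual of H_ε) is bounded in H_ε. -/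
open MeasureTheory Real Set Filter Topology

set_option maxHeartbeats 2000000 in
/-- the coercivity estimate
`J_ε(u) - (1/ϑ)⟨J'_ε(u), u⟩ ≥ ((ϑ-2)/(2ϑ))(1 - 1/K)‖u‖_ε²`, and consequently
every Palais–Smale sequence at the mountain-pass level is bounded in `H_ε`. -/
theorem statement_5
    (s a b : ℝ) (hs : s ∈ Ioo (3/4:ℝ) 1) (ha : 0 < a) (hb : 0 < b)
    (V : R3 → ℝ) (V₁ : ℝ) (Λ : Set R3) (V₀ : ℝ) (hV : HV V V₁ Λ V₀)
    (f : ℝ → ℝ) (q σ C₀ ϑ : ℝ) (hf : Hf s f q σ C₀ ϑ)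
    (K a₀ : ℝ) (hK : 2 * ϑ / (ϑ - 2) < K) (ha₀pos : 0 < a₀)
    (ha₀eq : f a₀ + a₀ ^ (pc s - 1) = V₁ / K * a₀) :
    ∀ ε > (0:ℝ),
      (∀ u : R3 → ℝ, MemHeps s ε V u →
        (ϑ - 2) / (2 * ϑ) * (1 - 1 / K) * normEpsSq s a ε V u ≤
          Jeps s a b ε V₁ K a₀ f Λ V u - 1 / ϑ * JepsD s a b ε V₁ K a₀ f Λ V u u) ∧
      (∀ U : ℕ → R3 → ℝ,
        PSseq s a b ε V₁ K a₀ f Λ V (cMP s a b ε V₁ K a₀ f Λ V) U →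
        ∃ M : ℝ, ∀ n, normEpsSq s a ε V (U n) ≤ M) := by
  intro ε hε
  classical
  -- unpack hypotheses
  obtain ⟨hfc, hf0, -, ⟨hq, hσ, hC₀, hflb, hfub⟩, ⟨hϑmem, hAR⟩, hf4⟩ := hf
  obtain ⟨hVc, hVglb, hV₁, hΛo, hΛb, -, -, -, -⟩ := hV
  have hVlb : ∀ y, V₁ ≤ V y := fun y => hVglb.1 ⟨y, rfl⟩
  -- numeric facts
  have hs3 : 0 < 3 - 2*s := by have := hs.2; simp only [Set.mem_Ioo] at hs; linarith [hs.2]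
  have hp4 : (4:ℝ) < pc s := by
    rw [pc, lt_div_iff₀ hs3]; simp only [Set.mem_Ioo] at hs; linarith [hs.1]
  have hϑ4 : (4:ℝ) < ϑ := hϑmem.1
  have hϑp : ϑ < pc s := hϑmem.2
  have hϑ0 : (0:ℝ) < ϑ := by linarith
  have hp1 : (1:ℝ) < pc s := by linarith
  have hp0 : (0:ℝ) < pc s := by linarith
  have hpm1 : (0:ℝ) ≤ pc s - 1 := by linarith
  have hK2 : (2:ℝ) < K := lt_trans (by rw [lt_div_iff₀ (by linarith : (0:ℝ) < ϑ - 2)]; linarith) hK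
  have hK0 : (0:ℝ) < K := by linarith
  have hi1 : 1/ϑ ≤ 1/4 := by rw [div_le_div_iff₀ hϑ0 (by norm_num)]; linarith
  have hi2 : (0:ℝ) < 1/ϑ := by positivity
  have hk1 : 1/K ≤ 1/2 := by rw [div_le_div_iff₀ hK0 (by norm_num)]; linarith
  have hk2 : (0:ℝ) < 1/K := by positivity
  -- nonnegativity of f
  have hfnn : ∀ t, 0 ≤ f t := by
    intro t
    rcases le_or_gt t 0 with h | h
    · rw [hf0 t h]
    · exact le_trans (le_of_lt (mul_pos hC₀ (Real.rpow_pos_of_pos h _))) (hflb t h)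
  -- continuity of the truncated power
  have hmrc : Continuous fun t : ℝ => max t 0 ^ (pc s - 1) :=
    (continuous_id.max continuous_const).rpow_const fun _ => Or.inr hpm1
  -- primitives vanish for nonpositive arguments
  have hprim_zero : ∀ h : ℝ → ℝ, (∀ t ≤ (0:ℝ), h t = 0) → ∀ t ≤ (0:ℝ), prim h t = 0 := by
    intro h h0 t ht
    rw [prim, intervalIntegral.integral_congr (g := fun _ => (0:ℝ))
      (fun τ hτ => h0 τ (le_trans hτ.2 (sup_le le_rfl ht))), intervalIntegral.integral_zero]
  have hprim_nonneg : ∀ h : ℝ → ℝ, (∀ t, 0 ≤ h t) → (∀ t ≤ (0:ℝ), h t = 0) →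
      ∀ t, 0 ≤ prim h t := by
    intro h hnn h0 t
    rcases le_or_gt t 0 with ht | ht
    · rw [hprim_zero h h0 t ht]
    · exact intervalIntegral.integral_nonneg ht.le fun τ _ => hnn τ
  -- primitive of the truncated power
  have hpowprim : ∀ t : ℝ, ∫ τ in (0:ℝ)..t, max τ 0 ^ (pc s - 1) = max t 0 ^ pc s / pc s := by
    intro t
    rcases le_or_gt t 0 with ht | ht
    · rw [intervalIntegral.integral_congr (g := fun _ => (0:ℝ)) (fun τ hτ => by
        have h1 : τ ≤ 0 := le_trans hτ.2 (sup_le le_rfl ht)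
        simp only [max_eq_right h1, Real.zero_rpow (show pc s - 1 ≠ 0 by linarith)]),
        intervalIntegral.integral_zero, max_eq_right ht,
        Real.zero_rpow (ne_of_gt hp0), zero_div]
    · rw [intervalIntegral.integral_congr (g := fun τ => τ ^ (pc s - 1)) (fun τ hτ => by
        have h1 : 0 ≤ τ := le_trans (le_of_eq (min_eq_left ht.le).symm) hτ.1
        simp only [max_eq_left h1]),
        integral_rpow (Or.inl (by linarith)),
        show pc s - 1 + 1 = pc s by ring, Real.zero_rpow (ne_of_gt hp0), sub_zero,
        max_eq_left ht.le]
  -- facts on ftil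
  have hftil0 : ∀ t ≤ (0:ℝ), ftil s V₁ K a₀ f t = 0 := by
    intro t ht
    rw [ftil, if_pos (ht.trans ha₀pos.le), hf0 t ht, max_eq_right ht,
      Real.zero_rpow (show pc s - 1 ≠ 0 by linarith), add_zero]
  have hftilnn : ∀ t, 0 ≤ ftil s V₁ K a₀ f t := by
    intro t; rw [ftil]; split
    · exact add_nonneg (hfnn t) (Real.rpow_nonneg (le_max_right _ _) _)
    · next h =>
        have ht : (0:ℝ) < t := lt_trans ha₀pos (lt_of_not_ge h)
        exact mul_nonneg (div_nonneg hV₁.le hK0.le) ht.le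
  have hftilc : Continuous (ftil s V₁ K a₀ f) := by
    have : ftil s V₁ K a₀ f =
        fun t => if t ≤ a₀ then f t + max t 0 ^ (pc s - 1) else V₁ / K * t := rfl
    rw [this]
    refine Continuous.if_le (hfc.add hmrc) (continuous_const.mul continuous_id)
      continuous_id continuous_const fun x hx => ?_
    rw [hx, max_eq_left ha₀pos.le, ha₀eq]
  have hiFtil : ∀ c d : ℝ, IntervalIntegrable (ftil s V₁ K a₀ f) volume c d :=
    fun c d => hftilc.intervalIntegrable c d
  have hftil_le : ∀ t, 0 < t → ftil s V₁ K a₀ f t ≤ V₁ / K * t := by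
    intro t ht
    rw [ftil]; split
    · next hta =>
      have hr : t / a₀ ≤ 1 := (div_le_one ha₀pos).2 hta
      have hr0 : 0 < t / a₀ := div_pos ht ha₀pos
      have h1 : f t ≤ f a₀ * (t / a₀) := by
        rcases eq_or_lt_of_le hta with rfl | hlt
        · rw [div_self (ne_of_gt ht), mul_one]
        · have hm := le_of_lt (hf4 (Set.mem_Ioi.2 ht) (Set.mem_Ioi.2 ha₀pos) hlt)
          simp only at hm
          have hm2 : f t * a₀ ^ (3:ℕ) ≤ f a₀ * t ^ (3:ℕ) :=
            (div_le_div_iff₀ (by positivity) (by positivity)).1 hm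
          rw [← mul_div_assoc, le_div_iff₀ ha₀pos]
          nlinarith [hm2, mul_nonneg (mul_nonneg (hfnn a₀) ht.le)
            (mul_nonneg (sub_nonneg.2 hlt.le) (add_nonneg ht.le ha₀pos.le)),
            mul_pos ha₀pos ha₀pos, ht, ha₀pos]
      have h2 : max t 0 ^ (pc s - 1) ≤ a₀ ^ (pc s - 1) * (t / a₀) := by
        rw [max_eq_left ht.le]
        have e1 : t ^ (pc s - 1) = (t/a₀) ^ (pc s - 1) * a₀ ^ (pc s - 1) := by
          rw [← Real.mul_rpow hr0.le ha₀pos.le, div_mul_cancel₀ _ (ne_of_gt ha₀pos)]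
        have h3 : (t/a₀) ^ (pc s - 1) ≤ (t/a₀) ^ (1:ℝ) :=
          Real.rpow_le_rpow_of_exponent_ge hr0 hr (by linarith)
        rw [Real.rpow_one] at h3
        rw [e1]
        calc (t/a₀) ^ (pc s - 1) * a₀ ^ (pc s - 1)
            ≤ (t/a₀) * a₀ ^ (pc s - 1) :=
              mul_le_mul_of_nonneg_right h3 (Real.rpow_nonneg ha₀pos.le _)
          _ = a₀ ^ (pc s - 1) * (t/a₀) := mul_comm _ _
      calc f t + max t 0 ^ (pc s - 1) ≤ f a₀ * (t/a₀) + a₀ ^ (pc s - 1) * (t/a₀) :=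
            add_le_add h1 h2
        _ = (f a₀ + a₀ ^ (pc s - 1)) * (t/a₀) := by ring
        _ = V₁ / K * a₀ * (t/a₀) := by rw [ha₀eq]
        _ = V₁ / K * t := by field_simp
    · exact le_rfl
  -- formulas for prim ftil
  have hFtil_le : ∀ t, t ≤ a₀ → prim (ftil s V₁ K a₀ f) t = prim f t + max t 0 ^ pc s / pc s := by
    intro t ht
    rw [prim, intervalIntegral.integral_congr (g := fun τ => f τ + max τ 0 ^ (pc s - 1))
      (fun τ hτ => by
        rw [ftil, if_pos (le_trans hτ.2 (sup_le ha₀pos.le ht))]),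
      intervalIntegral.integral_add (hfc.intervalIntegrable _ _) (hmrc.intervalIntegrable _ _),
      hpowprim t]
    rfl
  have hFtil_gt : ∀ t, a₀ < t →
      prim (ftil s V₁ K a₀ f) t
        = prim f a₀ + a₀ ^ pc s / pc s + V₁/(2*K)*(t^2 - a₀^2) := by
    intro t ht
    have hsplit : (∫ τ in (0:ℝ)..a₀, ftil s V₁ K a₀ f τ)
        + ∫ τ in a₀..t, ftil s V₁ K a₀ f τ = prim (ftil s V₁ K a₀ f) t :=
      intervalIntegral.integral_add_adjacent_intervals (hiFtil 0 a₀) (hiFtil a₀ t)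
    rw [← hsplit]
    have h1 : (∫ τ in (0:ℝ)..a₀, ftil s V₁ K a₀ f τ) = prim f a₀ + a₀ ^ pc s / pc s := by
      have h := hFtil_le a₀ le_rfl
      rw [max_eq_left ha₀pos.le] at h
      exact h
    have h2 : (∫ τ in a₀..t, ftil s V₁ K a₀ f τ) = V₁/(2*K)*(t^2 - a₀^2) := by
      rw [intervalIntegral.integral_congr (g := fun τ => V₁ / K * τ) (fun τ hτ => by
        have hτ1 : a₀ ≤ τ := le_trans (le_of_eq (min_eq_left ht.le).symm) hτ.1
        rcases eq_or_lt_of_le hτ1 with rfl | hlt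
        · rw [ftil, if_pos le_rfl, max_eq_left ha₀pos.le, ha₀eq]
        · rw [ftil, if_neg (not_le.2 hlt)]),
        intervalIntegral.integral_const_mul, integral_id]
      ring
    rw [h1, h2]
  -- formulas for gpen and Gpen
  have hgpen_in : ∀ x ∈ Λ, ∀ τ : ℝ,
      gpen s V₁ K a₀ f Λ x τ = f τ + max τ 0 ^ (pc s - 1) := by
    intro x hx τ
    rw [gpen]; split
    · next hτ =>
        rw [hf0 τ hτ, max_eq_right hτ, Real.zero_rpow (show pc s - 1 ≠ 0 by linarith), add_zero]
    · rw [Set.indicator_of_mem hx, Set.indicator_of_mem hx]; ring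
  have hgpen_out : ∀ x ∉ Λ, ∀ τ : ℝ, gpen s V₁ K a₀ f Λ x τ = ftil s V₁ K a₀ f τ := by
    intro x hx τ
    rw [gpen]; split
    · next hτ => rw [hftil0 τ hτ]
    · rw [Set.indicator_of_notMem hx, Set.indicator_of_notMem hx]; ring
  have hGin : ∀ x ∈ Λ, ∀ t : ℝ,
      Gpen s V₁ K a₀ f Λ x t = prim f t + max t 0 ^ pc s / pc s := by
    intro x hx t
    rw [Gpen, intervalIntegral.integral_congr (g := fun τ => f τ + max τ 0 ^ (pc s - 1))
      (fun τ _ => hgpen_in x hx τ),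
      intervalIntegral.integral_add (hfc.intervalIntegrable _ _) (hmrc.intervalIntegrable _ _),
      hpowprim t]
    rfl
  have hGout : ∀ x ∉ Λ, ∀ t : ℝ, Gpen s V₁ K a₀ f Λ x t = prim (ftil s V₁ K a₀ f) t := by
    intro x hx t
    rw [Gpen, intervalIntegral.integral_congr (g := ftil s V₁ K a₀ f)
      (fun τ _ => hgpen_out x hx τ)]
    rfl
  -- nonnegativity
  have hGnn : ∀ x t, 0 ≤ Gpen s V₁ K a₀ f Λ x t := by
    intro x t
    by_cases hx : x ∈ Λ
    · rw [hGin x hx t]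
      exact add_nonneg (hprim_nonneg f hfnn hf0 t)
        (div_nonneg (Real.rpow_nonneg (le_max_right _ _) _) hp0.le)
    · rw [hGout x hx t]
      exact hprim_nonneg _ hftilnn hftil0 t
  have hgmulnn : ∀ x t, 0 ≤ gpen s V₁ K a₀ f Λ x t * t := by
    intro x t
    rcases le_or_gt t 0 with ht | ht
    · rw [gpen, if_pos ht, zero_mul]
    · refine mul_nonneg ?_ ht.le
      by_cases hx : x ∈ Λ
      · rw [hgpen_in x hx t]
        exact add_nonneg (hfnn t) (Real.rpow_nonneg (le_max_right _ _) _)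
      · rw [hgpen_out x hx t]; exact hftilnn t
  -- the key pointwise inequality
  have hL3 : ∀ x t, ϑ * Gpen s V₁ K a₀ f Λ x t
      ≤ gpen s V₁ K a₀ f Λ x t * t + (ϑ - 2)/2 * (V₁/K) * t^2 := by
    intro x t
    rcases le_or_gt t 0 with ht | ht
    · have hG0 : Gpen s V₁ K a₀ f Λ x t = 0 := by
        by_cases hx : x ∈ Λ
        · rw [hGin x hx t, hprim_zero f hf0 t ht, max_eq_right ht,
            Real.zero_rpow (ne_of_gt hp0), zero_div, add_zero]
        · rw [hGout x hx t, hprim_zero _ hftil0 t ht]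
      rw [hG0, gpen, if_pos ht, zero_mul, mul_zero, zero_add]
      have : 0 ≤ (ϑ - 2)/2 * (V₁/K) := mul_nonneg (by linarith) (div_nonneg hV₁.le hK0.le)
      nlinarith [sq_nonneg t]
    · have hrp : max t 0 = t := max_eq_left ht.le
      have htp : t ^ (pc s - 1) * t = t ^ pc s := by
        rw [← Real.rpow_add_one (ne_of_gt ht) (pc s - 1), show pc s - 1 + 1 = pc s by ring]
      have hcase : gpen s V₁ K a₀ f Λ x t = f t + t ^ (pc s - 1) →
          Gpen s V₁ K a₀ f Λ x t = prim f t + t ^ pc s / pc s →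
          ϑ * Gpen s V₁ K a₀ f Λ x t
            ≤ gpen s V₁ K a₀ f Λ x t * t + (ϑ - 2)/2 * (V₁/K) * t^2 := by
        intro hg hG
        rw [hg, hG]
        have h1 : ϑ * prim f t ≤ t * f t := (hAR t ht).2
        have hXnn : 0 ≤ t ^ pc s := Real.rpow_nonneg ht.le _
        have h2 : ϑ * (t ^ pc s / pc s) ≤ t ^ pc s := by
          calc ϑ * (t ^ pc s / pc s) = (ϑ / pc s) * t ^ pc s := by ring
            _ ≤ 1 * t ^ pc s :=
              mul_le_mul_of_nonneg_right ((div_le_one hp0).2 hϑp.le) hXnn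
            _ = t ^ pc s := one_mul _
        have h3 : (f t + t ^ (pc s - 1)) * t = t * f t + t ^ pc s := by
          rw [add_mul, htp]; ring
        have h4 : 0 ≤ (ϑ - 2)/2 * (V₁/K) * t^2 :=
          mul_nonneg (mul_nonneg (by linarith) (div_nonneg hV₁.le hK0.le)) (sq_nonneg t)
        rw [mul_add, h3]
        linarith
      by_cases hx : x ∈ Λ
      · exact hcase (by rw [hgpen_in x hx t, hrp]) (by rw [hGin x hx t, hrp])
      · rcases le_or_gt t a₀ with hta | hta
        · exact hcase (by rw [hgpen_out x hx t, ftil, if_pos hta, hrp])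
            (by rw [hGout x hx t, hFtil_le t hta, hrp])
        · have hg : gpen s V₁ K a₀ f Λ x t = V₁/K * t := by
            rw [hgpen_out x hx t, ftil, if_neg (not_le.2 hta)]
          have hG : Gpen s V₁ K a₀ f Λ x t
              = prim f a₀ + a₀ ^ pc s / pc s + V₁/(2*K)*(t^2 - a₀^2) := by
            rw [hGout x hx t, hFtil_gt t hta]
          rw [hg, hG]
          have h1 : ϑ * prim f a₀ ≤ a₀ * f a₀ := (hAR a₀ ha₀pos).2
          have hXnn : 0 ≤ a₀ ^ pc s := Real.rpow_nonneg ha₀pos.le _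
          have h2 : ϑ * (a₀ ^ pc s / pc s) ≤ a₀ ^ pc s := by
            calc ϑ * (a₀ ^ pc s / pc s) = (ϑ / pc s) * a₀ ^ pc s := by ring
              _ ≤ 1 * a₀ ^ pc s :=
                mul_le_mul_of_nonneg_right ((div_le_one hp0).2 hϑp.le) hXnn
              _ = a₀ ^ pc s := one_mul _
          have h3 : a₀ * f a₀ + a₀ ^ pc s = V₁/K * a₀^2 := by
            have e2 : a₀ ^ pc s = a₀ ^ (pc s - 1) * a₀ := by
              rw [← Real.rpow_add_one (ne_of_gt ha₀pos) (pc s - 1),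
                show pc s - 1 + 1 = pc s by ring]
            rw [e2]
            calc a₀ * f a₀ + a₀ ^ (pc s - 1) * a₀ = (f a₀ + a₀ ^ (pc s - 1)) * a₀ := by ring
              _ = V₁ / K * a₀ * a₀ := by rw [ha₀eq]
              _ = V₁/K * a₀^2 := by ring
          have h5 : ϑ * (prim f a₀ + a₀ ^ pc s / pc s) ≤ V₁/K * a₀^2 := by
            rw [mul_add]; linarith
          have hd : 0 ≤ V₁/K := div_nonneg hV₁.le hK0.le
          have h7 : V₁/K*a₀^2 ≤ ϑ/2 * (V₁/K*a₀^2) := by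
            nlinarith [mul_nonneg (show (0:ℝ) ≤ ϑ - 2 by linarith)
              (mul_nonneg hd (sq_nonneg a₀))]
          have h8 : ϑ * (prim f a₀ + a₀ ^ pc s / pc s + V₁/(2*K)*(t^2 - a₀^2))
              = ϑ * (prim f a₀ + a₀ ^ pc s / pc s) + ϑ/2*(V₁/K*t^2) - ϑ/2*(V₁/K*a₀^2) := by
            ring
          have h9 : V₁/K * t * t + (ϑ - 2)/2 * (V₁/K) * t^2 = ϑ/2*(V₁/K*t^2) := by ring
          rw [h8, h9]
          linarith [h5, h7]
  -- generic nonnegativity of the pieces of the norm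
  have hQg : ∀ u : R3 → ℝ, 0 ≤ gagSq s u := fun u =>
    integral_nonneg fun z => div_nonneg (sq_nonneg _) (Real.rpow_nonneg (norm_nonneg _) _)
  have hWg : ∀ u : R3 → ℝ, 0 ≤ ∫ x : R3, V (ε • x) * u x ^ 2 := fun u =>
    integral_nonneg fun x => mul_nonneg (le_trans hV₁.le (hVlb _)) (sq_nonneg _)
  have hNg : ∀ u : R3 → ℝ, 0 ≤ normEpsSq s a ε V u := by
    intro u; rw [normEpsSq]
    exact add_nonneg (mul_nonneg ha.le (hQg u)) (hWg u)
  -- measurability of the set Λ_ε and finiteness of its measure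
  have hSmeas : MeasurableSet {x : R3 | ε • x ∈ Λ} :=
    (continuous_const_smul ε).measurable hΛo.measurableSet
  have hSfin : volume {x : R3 | ε • x ∈ Λ} < ⊤ := by
    refine Bornology.IsBounded.measure_lt_top ?_
    obtain ⟨R, hR⟩ := (isBounded_iff_forall_norm_le).1 hΛb
    refine (isBounded_iff_forall_norm_le).2 ⟨R/ε, fun x hx => ?_⟩
    have h1 : ‖ε • x‖ ≤ R := hR _ hx
    rw [norm_smul, Real.norm_eq_abs, abs_of_pos hε] at h1
    rw [le_div_iff₀ hε]
    linarith
  -- measurability of the composed nonlinearities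
  have hgpen_meas : ∀ w : R3 → ℝ, Measurable w →
      Measurable fun x : R3 => gpen s V₁ K a₀ f Λ (ε • x) (w x) := by
    intro w hw
    have hrw : (fun x : R3 => gpen s V₁ K a₀ f Λ (ε • x) (w x))
        = fun x => if w x ≤ 0 then 0 else
            ((if ε • x ∈ Λ then f (w x) + max (w x) 0 ^ (pc s - 1) else 0)
              + (1 - if ε • x ∈ Λ then (1:ℝ) else 0) * ftil s V₁ K a₀ f (w x)) := by
      funext x
      rw [gpen]
      by_cases h : ε • x ∈ Λ <;>
        simp [Set.indicator_of_mem, Set.indicator_of_notMem, h]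
    rw [hrw]
    have hs1 : MeasurableSet {x : R3 | w x ≤ 0} := hw measurableSet_Iic
    exact Measurable.ite hs1 measurable_const
      ((Measurable.ite hSmeas ((hfc.measurable.comp hw).add (hmrc.measurable.comp hw))
        measurable_const).add
        ((measurable_const.sub (Measurable.ite hSmeas measurable_const measurable_const)).mul
          (hftilc.measurable.comp hw)))
  have hGpen_meas : ∀ w : R3 → ℝ, Measurable w →
      Measurable fun x : R3 => Gpen s V₁ K a₀ f Λ (ε • x) (w x) := by
    intro w hw
    have hrw : (fun x : R3 => Gpen s V₁ K a₀ f Λ (ε • x) (w x))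
        = fun x => if ε • x ∈ Λ then prim f (w x) + max (w x) 0 ^ pc s / pc s
            else prim (ftil s V₁ K a₀ f) (w x) := by
      funext x
      by_cases hz : ε • x ∈ Λ
      · rw [if_pos hz, hGin _ hz]
      · rw [if_neg hz, hGout _ hz]
    rw [hrw]
    have hc1 : Continuous (prim f) :=
      intervalIntegral.continuous_primitive (fun c d => hfc.intervalIntegrable c d) 0
    have hc2 : Continuous (prim (ftil s V₁ K a₀ f)) :=
      intervalIntegral.continuous_primitive hiFtil 0
    have hc3 : Continuous fun t : ℝ => max t 0 ^ pc s :=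
      (continuous_id.max continuous_const).rpow_const fun _ => Or.inr hp0.le
    exact Measurable.ite hSmeas
      ((hc1.measurable.comp hw).add ((hc3.measurable.comp hw).div_const _))
      (hc2.measurable.comp hw)
  -- growth constants for the reverse comparison
  obtain ⟨T0, hT0⟩ := Filter.eventually_atTop.1 (hfub.eventually (gt_mem_nhds one_pos))
  set T : ℝ := max T0 1 with hTdef
  have hT1 : (1:ℝ) ≤ T := le_max_right _ _
  have hfT : ∀ t, T ≤ t → f t ≤ t ^ (σ - 1) := by
    intro t htT
    have ht0 : (0:ℝ) < t := lt_of_lt_of_le one_pos (le_trans hT1 htT)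
    have h2 : (0:ℝ) < t ^ (σ - 1) := Real.rpow_pos_of_pos ht0 _
    exact le_of_lt ((div_lt_one h2).1 (hT0 t (le_trans (le_max_left _ _) htT)))
  obtain ⟨C, hC⟩ := isCompact_Icc.exists_bound_of_continuousOn
    (hfc.continuousOn : ContinuousOn f (Icc (0:ℝ) T))
  have hCnn : 0 ≤ C := le_trans (norm_nonneg _) (hC 0 ⟨le_rfl, by linarith⟩)
  set C₂ : ℝ := (C + T ^ (pc s - 1)) * T with hC₂def
  set C₁ : ℝ := 2 * pc s with hC₁def
  have hC₂0 : 0 ≤ C₂ :=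
    mul_nonneg (add_nonneg hCnn (Real.rpow_nonneg (by linarith) _)) (by linarith)
  have hC₁0 : 0 ≤ C₁ := by positivity
  -- THE FIRST PART
  have key : ∀ u : R3 → ℝ, MemHeps s ε V u →
      (ϑ - 2) / (2 * ϑ) * (1 - 1 / K) * normEpsSq s a ε V u ≤
        Jeps s a b ε V₁ K a₀ f Λ V u - 1 / ϑ * JepsD s a b ε V₁ K a₀ f Λ V u u := by
    intro u hu
    obtain ⟨⟨hu2, -⟩, huV⟩ := hu
    obtain ⟨um, hum, huae⟩ := hu2.aestronglyMeasurable
    have humm : Measurable um := hum.measurable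
    have hφm : AEStronglyMeasurable
        (fun x => gpen s V₁ K a₀ f Λ (ε • x) (u x) * u x) volume :=
      (((hgpen_meas um humm).mul humm).aestronglyMeasurable).congr
        (huae.symm.mono fun x hx => by simp only [Pi.mul_apply, hx])
    have hψm : AEStronglyMeasurable (fun x => Gpen s V₁ K a₀ f Λ (ε • x) (u x)) volume :=
      ((hGpen_meas um humm).aestronglyMeasurable).congr
        (huae.symm.mono fun x hx => by simp only [hx])
    have hφnn : ∀ x, 0 ≤ gpen s V₁ K a₀ f Λ (ε • x) (u x) * u x := fun x => hgmulnn _ _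
    have hψnn : ∀ x, 0 ≤ Gpen s V₁ K a₀ f Λ (ε • x) (u x) := fun x => hGnn _ _
    -- pointwise comparison G ≤ g·t/ϑ + c'·V t²/K
    have hψle : ∀ x, Gpen s V₁ K a₀ f Λ (ε • x) (u x)
        ≤ 1/ϑ * (gpen s V₁ K a₀ f Λ (ε • x) (u x) * u x)
          + (1/2 - 1/ϑ) * (1/K) * (V (ε • x) * u x ^ 2) := by
      intro x
      have h1 := hL3 (ε • x) (u x)
      have h2 : V₁ * u x ^ 2 ≤ V (ε • x) * u x ^ 2 :=
        mul_le_mul_of_nonneg_right (hVlb _) (sq_nonneg _)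
      have h3 : Gpen s V₁ K a₀ f Λ (ε • x) (u x)
          ≤ 1/ϑ * (gpen s V₁ K a₀ f Λ (ε • x) (u x) * u x)
            + (1/2 - 1/ϑ) * (1/K) * (V₁ * u x ^ 2) := by
        have e1 : (1/2 - 1/ϑ) * (1/K) * (V₁ * u x ^ 2)
            = 1/ϑ * ((ϑ - 2)/2 * (V₁/K) * u x ^ 2) := by
          field_simp
        rw [e1, ← mul_add]
        calc Gpen s V₁ K a₀ f Λ (ε • x) (u x)
            = 1/ϑ * (ϑ * Gpen s V₁ K a₀ f Λ (ε • x) (u x)) := by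
              field_simp
          _ ≤ 1/ϑ * (gpen s V₁ K a₀ f Λ (ε • x) (u x) * u x
                + (ϑ - 2)/2 * (V₁/K) * u x ^ 2) :=
              mul_le_mul_of_nonneg_left h1 hi2.le
      have h4 : (1/2 - 1/ϑ) * (1/K) * (V₁ * u x ^ 2)
          ≤ (1/2 - 1/ϑ) * (1/K) * (V (ε • x) * u x ^ 2) :=
        mul_le_mul_of_nonneg_left h2 (mul_nonneg (by linarith) hk2.le)
      linarith
    -- the reverse comparison needed to rule out a degenerate case
    have hL4 : ∀ x, gpen s V₁ K a₀ f Λ (ε • x) (u x) * u x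
        ≤ C₁ * Gpen s V₁ K a₀ f Λ (ε • x) (u x)
          + ({x : R3 | ε • x ∈ Λ}.indicator (fun _ => C₂) x
            + 1/K * (V (ε • x) * u x ^ 2)) := by
      intro x
      have hVt : 0 ≤ 1/K * (V (ε • x) * u x ^ 2) :=
        mul_nonneg hk2.le (mul_nonneg (le_trans hV₁.le (hVlb _)) (sq_nonneg _))
      have hC₁G : 0 ≤ C₁ * Gpen s V₁ K a₀ f Λ (ε • x) (u x) := mul_nonneg hC₁0 (hψnn x)
      have hind : 0 ≤ {x : R3 | ε • x ∈ Λ}.indicator (fun _ => C₂) x :=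
        Set.indicator_nonneg (fun _ _ => hC₂0) x
      rcases le_or_gt (u x) 0 with ht | ht
      · rw [gpen, if_pos ht, zero_mul]
        linarith
      · by_cases hx : ε • x ∈ Λ
        · have hgx : gpen s V₁ K a₀ f Λ (ε • x) (u x) = f (u x) + u x ^ (pc s - 1) := by
            rw [hgpen_in _ hx, max_eq_left ht.le]
          have hind1 : {x : R3 | ε • x ∈ Λ}.indicator (fun _ => C₂) x = C₂ :=
            Set.indicator_of_mem (show x ∈ {x : R3 | ε • x ∈ Λ} from hx) _
          rcases le_or_gt (u x) T with hle | hgt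
          · have h1 : f (u x) ≤ C :=
              le_trans (le_abs_self _) (hC (u x) ⟨ht.le, hle⟩)
            have h2 : u x ^ (pc s - 1) ≤ T ^ (pc s - 1) :=
              Real.rpow_le_rpow ht.le hle hpm1
            have h3 : gpen s V₁ K a₀ f Λ (ε • x) (u x) * u x ≤ C₂ := by
              rw [hgx, hC₂def]
              exact mul_le_mul (add_le_add h1 h2) hle ht.le
                (add_nonneg hCnn (Real.rpow_nonneg (by linarith) _))
            rw [hind1]
            linarith
          · have ht1 : (1:ℝ) ≤ u x := le_trans hT1 hgt.le
            have h1 : f (u x) ≤ u x ^ (σ - 1) := hfT _ hgt.le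
            have e1 : u x ^ (σ - 1) * u x = u x ^ σ := by
              rw [← Real.rpow_add_one (ne_of_gt ht) (σ - 1), show σ - 1 + 1 = σ by ring]
            have e2 : u x ^ (pc s - 1) * u x = u x ^ pc s := by
              rw [← Real.rpow_add_one (ne_of_gt ht) (pc s - 1),
                show pc s - 1 + 1 = pc s by ring]
            have e3 : u x ^ σ ≤ u x ^ pc s :=
              Real.rpow_le_rpow_of_exponent_le ht1 hσ.2.le
            have h2 : gpen s V₁ K a₀ f Λ (ε • x) (u x) * u x ≤ 2 * u x ^ pc s := by
              rw [hgx, add_mul, e2]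
              have h5 : f (u x) * u x ≤ u x ^ σ := by
                rw [← e1]; exact mul_le_mul_of_nonneg_right h1 ht.le
              linarith
            have h3 : u x ^ pc s / pc s ≤ Gpen s V₁ K a₀ f Λ (ε • x) (u x) := by
              rw [hGin _ hx, max_eq_left ht.le]
              have := hprim_nonneg f hfnn hf0 (u x)
              linarith
            have h4 : 2 * u x ^ pc s = C₁ * (u x ^ pc s / pc s) := by
              rw [hC₁def]
              field_simp
            calc gpen s V₁ K a₀ f Λ (ε • x) (u x) * u x ≤ 2 * u x ^ pc s := h2
              _ = C₁ * (u x ^ pc s / pc s) := h4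
              _ ≤ C₁ * Gpen s V₁ K a₀ f Λ (ε • x) (u x) :=
                  mul_le_mul_of_nonneg_left h3 hC₁0
              _ ≤ _ := le_add_of_nonneg_right (add_nonneg hind hVt)
        · have hgx : gpen s V₁ K a₀ f Λ (ε • x) (u x) = ftil s V₁ K a₀ f (u x) :=
            hgpen_out _ hx _
          have h1 : gpen s V₁ K a₀ f Λ (ε • x) (u x) * u x ≤ 1/K * (V₁ * u x ^ 2) := by
            rw [hgx]
            calc ftil s V₁ K a₀ f (u x) * u x ≤ V₁ / K * u x * u x :=
                mul_le_mul_of_nonneg_right (hftil_le _ ht) ht.le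
              _ = 1/K * (V₁ * u x ^ 2) := by ring
          have h2 : 1/K * (V₁ * u x ^ 2) ≤ 1/K * (V (ε • x) * u x ^ 2) :=
            mul_le_mul_of_nonneg_left
              (mul_le_mul_of_nonneg_right (hVlb _) (sq_nonneg _)) hk2.le
          linarith
    -- the integral claim
    have hclaim : (∫ x : R3, Gpen s V₁ K a₀ f Λ (ε • x) (u x))
        ≤ 1/ϑ * (∫ x : R3, gpen s V₁ K a₀ f Λ (ε • x) (u x) * u x)
          + (1/2 - 1/ϑ) * (1/K) * ∫ x : R3, V (ε • x) * u x ^ 2 := by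
      by_cases hφint : Integrable (fun x : R3 => gpen s V₁ K a₀ f Λ (ε • x) (u x) * u x)
      · have hdom : Integrable (fun x : R3 =>
            1/ϑ * (gpen s V₁ K a₀ f Λ (ε • x) (u x) * u x)
              + (1/2 - 1/ϑ) * (1/K) * (V (ε • x) * u x ^ 2)) :=
          (hφint.const_mul _).add (huV.const_mul _)
        have hψint : Integrable (fun x : R3 => Gpen s V₁ K a₀ f Λ (ε • x) (u x)) :=
          hdom.mono' hψm (ae_of_all _ fun x => by
            rw [Real.norm_eq_abs, abs_of_nonneg (hψnn x)]
            exact hψle x)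
        calc (∫ x : R3, Gpen s V₁ K a₀ f Λ (ε • x) (u x))
            ≤ ∫ x : R3, (1/ϑ * (gpen s V₁ K a₀ f Λ (ε • x) (u x) * u x)
                + (1/2 - 1/ϑ) * (1/K) * (V (ε • x) * u x ^ 2)) :=
              integral_mono hψint hdom hψle
          _ = 1/ϑ * (∫ x : R3, gpen s V₁ K a₀ f Λ (ε • x) (u x) * u x)
              + (1/2 - 1/ϑ) * (1/K) * ∫ x : R3, V (ε • x) * u x ^ 2 := by
              rw [integral_add (hφint.const_mul _) (huV.const_mul _),
                integral_const_mul, integral_const_mul]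
      · have hψnint : ¬ Integrable (fun x : R3 => Gpen s V₁ K a₀ f Λ (ε • x) (u x)) := by
          intro hψint
          refine hφint ?_
          have hdom2 : Integrable (fun x : R3 =>
              C₁ * Gpen s V₁ K a₀ f Λ (ε • x) (u x)
                + ({x : R3 | ε • x ∈ Λ}.indicator (fun _ => C₂) x
                  + 1/K * (V (ε • x) * u x ^ 2))) :=
            (hψint.const_mul _).add
              (((integrable_indicator_iff hSmeas).2
                (integrableOn_const hSfin.ne)).add (huV.const_mul _))
          exact hdom2.mono' hφm (ae_of_all _ fun x => by
            rw [Real.norm_eq_abs, abs_of_nonneg (hφnn x)]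
            exact hL4 x)
        rw [integral_undef hφint, integral_undef hψnint]
        have h0 : 0 ≤ (1/2 - 1/ϑ) * (1/K) := mul_nonneg (by linarith) hk2.le
        have := mul_nonneg h0 (hWg u)
        linarith
    -- assemble
    have hform : gagForm s u u = gagSq s u := by
      rw [gagForm, gagSq]
      congr 1
      funext z
      rw [pow_two]
    have hWeq : (∫ x : R3, V (ε • x) * u x * u x) = ∫ x : R3, V (ε • x) * u x ^ 2 := by
      congr 1
      funext x
      ring
    have hc'eq : (ϑ - 2) / (2 * ϑ) = 1/2 - 1/ϑ := by
      field_simp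
    simp only [Jeps, JepsD, normEpsSq]
    rw [hform, hWeq, hc'eq]
    have hQ := hQg u
    have hW := hWg u
    have he1 : 0 ≤ (1/2 - 1/ϑ) * (1/K) * (a * gagSq s u) :=
      mul_nonneg (mul_nonneg (by linarith) hk2.le) (mul_nonneg ha.le hQ)
    have he2 : 0 ≤ (1/4 - 1/ϑ) * (b * gagSq s u ^ 2) :=
      mul_nonneg (by linarith) (mul_nonneg hb.le (sq_nonneg _))
    nlinarith [hclaim, he1, he2]
  refine ⟨key, ?_⟩
  -- THE SECOND PART: boundedness of PS sequences
  intro U hPS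
  obtain ⟨hUmem, hJtend, e, hetend, hebd⟩ := hPS
  obtain ⟨M₁, hM₁⟩ := hJtend.bddAbove_range
  have hM₁' : ∀ n, Jeps s a b ε V₁ K a₀ f Λ V (U n) ≤ M₁ := fun n =>
    hM₁ (Set.mem_range_self n)
  have habs : Tendsto (fun n => |e n|) atTop (𝓝 0) := by
    have := hetend.abs
    rwa [abs_zero] at this
  obtain ⟨M₂, hM₂⟩ := habs.bddAbove_range
  have hM₂' : ∀ n, |e n| ≤ M₂ := fun n => hM₂ (Set.mem_range_self n)
  have hM₂0 : 0 ≤ M₂ := le_trans (abs_nonneg _) (hM₂' 0)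
  set δ : ℝ := (ϑ - 2) / (2 * ϑ) * (1 - 1 / K) with hδdef
  have hδ : 0 < δ :=
    mul_pos (div_pos (by linarith) (by linarith)) (by linarith)
  set D : ℝ := max M₁ 0 + M₂/ϑ with hDdef
  have hD0 : 0 ≤ D := add_nonneg (le_max_right _ _) (div_nonneg hM₂0 hϑ0.le)
  refine ⟨max 1 ((D/δ)^2), fun n => ?_⟩
  have h1 := key (U n) (hUmem n)
  have h2 := hebd n (U n) (hUmem n)
  set N : ℝ := normEpsSq s a ε V (U n) with hNdef
  have hNn : 0 ≤ N := hNg (U n)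
  have hsq : Real.sqrt N ^ 2 = N := Real.sq_sqrt hNn
  have hsnn : 0 ≤ Real.sqrt N := Real.sqrt_nonneg _
  have h3 : δ * N ≤ M₁ + M₂/ϑ * Real.sqrt N := by
    have h4 : -(JepsD s a b ε V₁ K a₀ f Λ V (U n) (U n))
        ≤ e n * Real.sqrt N := le_trans (neg_le_abs _) h2
    have h5 : e n * Real.sqrt N ≤ M₂ * Real.sqrt N :=
      mul_le_mul_of_nonneg_right (le_trans (le_abs_self _) (hM₂' n)) hsnn
    have h6 := mul_le_mul_of_nonneg_left (le_trans h4 h5) hi2.le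
    have h7 := hM₁' n
    have h8 : 1/ϑ * (M₂ * Real.sqrt N) = M₂/ϑ * Real.sqrt N := by ring
    nlinarith [h1, h6, h7]
  rcases le_or_gt (Real.sqrt N) 1 with hr | hr
  · have hN1 : N ≤ 1 := by nlinarith [hsq, hsnn]
    exact le_trans hN1 (le_max_left _ _)
  · have h8 : δ * Real.sqrt N * Real.sqrt N ≤ D * Real.sqrt N := by
      have h9 : M₁ ≤ max M₁ 0 * Real.sqrt N := by
        calc M₁ ≤ max M₁ 0 := le_max_left _ _
          _ = max M₁ 0 * 1 := (mul_one _).symm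
          _ ≤ max M₁ 0 * Real.sqrt N :=
            mul_le_mul_of_nonneg_left hr.le (le_max_right _ _)
      calc δ * Real.sqrt N * Real.sqrt N = δ * N := by
            rw [mul_assoc, Real.mul_self_sqrt hNn]
        _ ≤ M₁ + M₂/ϑ * Real.sqrt N := h3
        _ ≤ max M₁ 0 * Real.sqrt N + M₂/ϑ * Real.sqrt N := by linarith [h9]
        _ = D * Real.sqrt N := by rw [hDdef]; ring
    have h10 : δ * Real.sqrt N ≤ D := le_of_mul_le_mul_right h8 (lt_trans one_pos hr)
    have h11 : Real.sqrt N ≤ D/δ := by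
      rw [le_div_iff₀ hδ]
      linarith
    have h12 : N ≤ (D/δ)^2 := by
      rw [← hsq]
      exact pow_le_pow_left₀ hsnn h11 2
    exact le_trans h12 (le_max_right _ _)
end
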